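/- Let (Ω, 𝓕, ℙ) be a probability space, M ≥ 1, h ≥ 1, n ≥ 1 integers, A_s ∈ ℝ^{n×n} for each mode s ∈ Fin M, and r : ℕ → Ω → Fin M a stochastic process (each r(t) measurable). For an initial state x₀ ∈ ℝⁿ, define the solution x(t, ω) = A_{r(t−1,ω)} ⋯ A_{r(1,ω)} A_{r(0,ω)} x₀ (with x(0, ω) = x₀). Assume: (i) there are scalars ρ̲ₛ, ρ̄ₛ ∈ [0,1] such that almost surely, for every mode s, liminf_{k→∞} (1/k)·Σ_{t=0}^{k−1} 1[r(t)=s] ≥ ρ̲ₛ and limsup_{k→∞} (1/k)·Σ_{t=0}^{k−1} 1[r(t)=s] ≤ ρ̄ₛ; (ii) for every q ∈ (Fin M)^h, (1/k)·Σ_{i=0}^{k−1} 1[r̄(i)=q] converges almost surely as k→∞; (iii) there exist a vector norm μ on ℝⁿ (μ(x) ≥ 0 with μ(x) = 0 iff x = 0, μ(c·x) = |c|·μ(x), μ(x+y) ≤ μ(x)+μ(y)), with induced matrix norm ν(N) = sup_{x ≠ 0} μ(Nx)/μ(x), and a scalar ε ∈ (0,1), such that for every ρ : (Fin M)^h → [0,1]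 in the LP1 feasible set F_h one has Σ_{q ∈ (Fin M)^h} γ_q · ρ_q < 0, where γ_q = ln ν(Γ_q) if Γ_q ≠ 0 and γ_q = ln ε if Γ_q = 0. Then: (a) for every ε' > 0 and p̄ > 0 there exists δ > 0 such that whenever the initial state satisfies ‖x₀‖₂ < δ, ℙ[sup_{t ∈ ℕ} ‖x(t)‖₂ > ε'] < p̄; and (b) for every initial state x₀, ℙ[lim_{t→∞} ‖x(t)‖₂ = 0] = 1. -/

import Mathlib

open Filter MeasureTheory Topology

noncomputable section

/-- `modeCount M h s q` is `c_s(q)`: the number of indices `j` with `q j = s`. -/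
def modeCount (M h : ℕ) (s : Fin M) (q : Fin h → Fin M) : ℕ :=
  (Finset.univ.filter fun j : Fin h => q j = s).card

/-- `Γ_q = A_{q_h} A_{q_{h−1}} ⋯ A_{q_1}` (with `q` indexed from `0`). -/
def Gamma (M h n : ℕ) (A : Fin M → Matrix (Fin n) (Fin n) ℝ)
    (q : Fin h → Fin M) : Matrix (Fin n) (Fin n) ℝ :=
  (((List.finRange h).reverse.map fun j => A (q j)).prod)

/-- The Euclidean norm `‖x‖₂` on `ℝⁿ`. -/
def euclNorm (n : ℕ) (x : Fin n → ℝ) : ℝ :=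
  Real.sqrt (∑ i, (x i) ^ 2)

/-! ### Auxiliary lemmas on `euclNorm` -/

lemma euclNorm_nonneg (n : ℕ) (x : Fin n → ℝ) : 0 ≤ euclNorm n x := Real.sqrt_nonneg _

lemma euclNorm_zero (n : ℕ) : euclNorm n 0 = 0 := by
  simp [euclNorm]

lemma abs_le_euclNorm (n : ℕ) (x : Fin n → ℝ) (i : Fin n) : |x i| ≤ euclNorm n x := by
  rw [← Real.sqrt_sq_eq_abs]
  exact Real.sqrt_le_sqrt (Finset.single_le_sum (fun j _ => sq_nonneg (x j)) (Finset.mem_univ i))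

lemma euclNorm_eq_zero_iff (n : ℕ) (x : Fin n → ℝ) : euclNorm n x = 0 ↔ x = 0 := by
  constructor
  · intro hx
    funext i
    have h1 : |x i| ≤ 0 := hx ▸ abs_le_euclNorm n x i
    have := abs_nonneg (x i)
    simpa using le_antisymm h1 this
  · rintro rfl; exact euclNorm_zero n

lemma euclNorm_smul (n : ℕ) (c : ℝ) (x : Fin n → ℝ) :
    euclNorm n (c • x) = |c| * euclNorm n x := by
  unfold euclNorm
  rw [← Real.sqrt_sq_eq_abs, ← Real.sqrt_mul (sq_nonneg c)]
  congr 1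
  rw [Finset.mul_sum]
  refine Finset.sum_congr rfl fun i _ => ?_
  simp [mul_pow]

lemma euclNorm_le_sum_abs (n : ℕ) (x : Fin n → ℝ) : euclNorm n x ≤ ∑ i, |x i| := by
  unfold euclNorm
  have hsq : (∑ i, (x i)^2) ≤ (∑ i, |x i|)^2 := by
    calc (∑ i, (x i)^2) = ∑ i, |x i|^2 := by
          refine Finset.sum_congr rfl fun i _ => (sq_abs _).symm
    _ ≤ (∑ i, |x i|)^2 := Finset.sum_sq_le_sq_sum_of_nonneg (fun i _ => abs_nonneg _)
  calc Real.sqrt (∑ i, (x i)^2) ≤ Real.sqrt ((∑ i, |x i|)^2) := Real.sqrt_le_sqrt hsq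
  _ = abs (∑ i, |x i|) := Real.sqrt_sq_eq_abs _
  _ = ∑ i, |x i| := abs_of_nonneg (Finset.sum_nonneg fun i _ => abs_nonneg _)

/-- `euclNorm (N.mulVec v) ≤ (Σ_{ij} |N i j|) * euclNorm v` -/
lemma euclNorm_mulVec_le (n : ℕ) (N : Matrix (Fin n) (Fin n) ℝ) (v : Fin n → ℝ) :
    euclNorm n (N.mulVec v) ≤ (∑ i, ∑ j, |N i j|) * euclNorm n v := by
  have h1 : ∀ i, |N.mulVec v i| ≤ (∑ j, |N i j|) * euclNorm n v := by
    intro i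
    calc |N.mulVec v i| = |∑ j, N i j * v j| := by simp [Matrix.mulVec, dotProduct]
    _ ≤ ∑ j, |N i j * v j| := Finset.abs_sum_le_sum_abs _ _
    _ ≤ ∑ j, |N i j| * euclNorm n v := by
        refine Finset.sum_le_sum fun j _ => ?_
        rw [abs_mul]
        exact mul_le_mul_of_nonneg_left (abs_le_euclNorm n v j) (abs_nonneg _)
    _ = (∑ j, |N i j|) * euclNorm n v := by rw [Finset.sum_mul]
  calc euclNorm n (N.mulVec v) ≤ ∑ i, |N.mulVec v i| := euclNorm_le_sum_abs n _
  _ ≤ ∑ i, (∑ j, |N i j|) * euclNorm n v := Finset.sum_le_sum fun i _ => h1 i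
  _ = (∑ i, ∑ j, |N i j|) * euclNorm n v := by rw [Finset.sum_mul]

lemma euclNorm_continuous (n : ℕ) : Continuous (euclNorm n) := by
  unfold euclNorm
  exact (continuous_finset_sum _ fun i _ => ((continuous_apply i).pow 2)).sqrt

/-! ### Norm-equivalence lemmas for an abstract vector norm -/

section NormEquiv
variable {n : ℕ} (μnorm : (Fin n → ℝ) → ℝ)
  (hμnonneg : ∀ x, 0 ≤ μnorm x)
  (hμzero : ∀ x, μnorm x = 0 ↔ x = 0)
  (hμsmul : ∀ (c : ℝ) x, μnorm (c • x) = |c| * μnorm x)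
  (hμadd : ∀ x y, μnorm (x + y) ≤ μnorm x + μnorm y)

include hμsmul in
lemma mu_zero : μnorm 0 = 0 := by
  have := hμsmul 0 0
  simpa using this

include hμadd in
lemma mu_sub_le (x y : (Fin n → ℝ)) : μnorm x - μnorm y ≤ μnorm (x - y) := by
  have h := hμadd (x - y) y
  simp only [sub_add_cancel] at h
  linarith

include hμsmul hμadd in
lemma abs_mu_sub_le (x y : (Fin n → ℝ)) : |μnorm x - μnorm y| ≤ μnorm (x - y) := by
  rcases abs_cases (μnorm x - μnorm y) with ⟨he, _⟩ | ⟨he, _⟩ <;> rw [he]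
  · exact mu_sub_le μnorm hμadd x y
  · have h := mu_sub_le μnorm hμadd y x
    have : μnorm (y - x) = μnorm (x - y) := by
      have := hμsmul (-1) (x - y)
      simp only [neg_one_smul, neg_sub, abs_neg, abs_one, one_mul] at this
      exact this
    linarith

include hμnonneg hμsmul hμadd in
/-- upper bound: `μnorm x ≤ K * euclNorm x` with `K = Σ_j μnorm (e_j)`. -/
lemma mu_le_eucl (x : Fin n → ℝ) :
    μnorm x ≤ (∑ j, μnorm (Pi.single j 1)) * euclNorm n x := by
  set e : Fin n → (Fin n → ℝ) := fun j => Pi.single j 1 with he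
  have hx : x = ∑ j, (x j) • (e j) := by
    funext i
    simp [he, Pi.single_apply, Finset.sum_apply, mul_comm]
  calc μnorm x = μnorm (∑ j, (x j) • (e j)) := by rw [← hx]
  _ ≤ ∑ j, μnorm ((x j) • (e j)) :=
      Finset.le_sum_of_subadditive μnorm (mu_zero μnorm hμsmul).le hμadd _ _
  _ = ∑ j, |x j| * μnorm (e j) := Finset.sum_congr rfl fun j _ => hμsmul _ _
  _ ≤ ∑ j, euclNorm n x * μnorm (e j) := by
      refine Finset.sum_le_sum fun j _ => ?_
      exact mul_le_mul_of_nonneg_right (abs_le_euclNorm n x j) (hμnonneg _)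
  _ = (∑ j, μnorm (e j)) * euclNorm n x := by
      rw [Finset.sum_mul]
      exact Finset.sum_congr rfl fun j _ => mul_comm _ _

include hμnonneg hμsmul hμadd in
lemma mu_continuous : Continuous μnorm := by
  set K := ∑ j, μnorm (Pi.single j 1) with hK
  have hK0 : 0 ≤ K := Finset.sum_nonneg fun j _ => hμnonneg _
  rw [Metric.continuous_iff]
  intro x ε hε
  rcases eq_or_lt_of_le hK0 with hKz | hKpos
  · refine ⟨1, one_pos, fun y _ => ?_⟩
    have h1 := abs_mu_sub_le μnorm hμsmul hμadd y x
    have h2 := mu_le_eucl μnorm hμnonneg hμsmul hμadd (y - x)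
    rw [← hK, ← hKz] at h2
    rw [Real.dist_eq]
    calc |μnorm y - μnorm x| ≤ μnorm (y - x) := h1
    _ ≤ 0 * euclNorm n (y - x) := h2
    _ = 0 := by ring
    _ < ε := hε
  · refine ⟨ε / (K * (n+1)), by positivity, fun y hy => ?_⟩
    have h1 := abs_mu_sub_le μnorm hμsmul hμadd y x
    have h2 := mu_le_eucl μnorm hμnonneg hμsmul hμadd (y - x)
    rw [← hK] at h2
    have h3 : euclNorm n (y - x) ≤ ∑ i : Fin n, |(y - x) i| := euclNorm_le_sum_abs n _
    have h4 : ∀ i : Fin n, |(y - x) i| ≤ dist y x := by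
      intro i
      have := dist_le_pi_dist y x i
      simpa [Real.dist_eq] using this
    have h5 : euclNorm n (y - x) ≤ n * dist y x := by
      calc euclNorm n (y - x) ≤ ∑ i : Fin n, |(y - x) i| := h3
      _ ≤ ∑ i : Fin n, dist y x := Finset.sum_le_sum fun i _ => h4 i
      _ = n * dist y x := by simp [Finset.sum_const, nsmul_eq_mul]
    rw [Real.dist_eq]
    have hd0 : 0 ≤ dist y x := dist_nonneg
    calc |μnorm y - μnorm x| ≤ μnorm (y - x) := h1
    _ ≤ K * euclNorm n (y - x) := h2
    _ ≤ K * (n * dist y x) := by nlinarith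
    _ < ε := by
        have hlt : dist y x * (K * (n+1)) < ε := (lt_div_iff₀ (by positivity)).mp hy
        nlinarith

include hμnonneg hμzero hμsmul hμadd in
lemma eucl_le_mu (hn : 1 ≤ n) :
    ∃ m : ℝ, 0 < m ∧ ∀ x, m * euclNorm n x ≤ μnorm x := by
  have hμcont : Continuous μnorm := mu_continuous μnorm hμnonneg hμsmul hμadd
  set S : Set (Fin n → ℝ) := {x | euclNorm n x = 1} with hS
  have hclosed : IsClosed S := isClosed_eq (euclNorm_continuous n) continuous_const
  have hsub : S ⊆ Metric.closedBall 0 1 := by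
    intro x hx
    rw [Metric.mem_closedBall]
    rw [dist_pi_le_iff zero_le_one]
    intro i
    have := abs_le_euclNorm n x i
    rw [hx] at this
    simpa [Real.dist_eq] using this
  have hcomp : IsCompact S :=
    (isCompact_closedBall (0 : Fin n → ℝ) 1).of_isClosed_subset hclosed hsub
  have hne : S.Nonempty := by
    have hn' : 0 < n := hn
    set x0 : Fin n → ℝ := Pi.single ⟨0, hn'⟩ 1 with hx0
    refine ⟨x0, ?_⟩
    show euclNorm n x0 = 1
    unfold euclNorm
    have : (∑ i, (x0 i)^2) = 1 := by
      simp [hx0, Pi.single_apply]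
    rw [this]
    exact Real.sqrt_one
  obtain ⟨z, hzS, hzmin⟩ := hcomp.exists_isMinOn hne hμcont.continuousOn
  have hz0 : z ≠ 0 := by
    intro hz
    rw [hz] at hzS
    have : euclNorm n (0 : Fin n → ℝ) = 0 := (euclNorm_eq_zero_iff n 0).mpr rfl
    rw [hS] at hzS; simp only [Set.mem_setOf_eq] at hzS
    rw [hzS] at this; norm_num at this
  have hm : 0 < μnorm z := lt_of_le_of_ne (hμnonneg z) (fun hc => hz0 ((hμzero z).mp hc.symm))
  refine ⟨μnorm z, hm, fun x => ?_⟩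
  rcases eq_or_ne x 0 with rfl | hx
  · rw [(euclNorm_eq_zero_iff n 0).mpr rfl, (hμzero 0).mpr rfl]; simp
  · have hex : 0 < euclNorm n x :=
      lt_of_le_of_ne (euclNorm_nonneg n x) (fun hc => hx ((euclNorm_eq_zero_iff n x).mp hc.symm))
    have hmem : (euclNorm n x)⁻¹ • x ∈ S := by
      rw [hS]; simp only [Set.mem_setOf_eq]
      rw [euclNorm_smul, abs_of_pos (inv_pos.mpr hex), inv_mul_cancel₀ hex.ne']
    have h1 : μnorm z ≤ μnorm ((euclNorm n x)⁻¹ • x) := hzmin hmem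
    rw [hμsmul, abs_of_pos (inv_pos.mpr hex)] at h1
    calc μnorm z * euclNorm n x ≤ ((euclNorm n x)⁻¹ * μnorm x) * euclNorm n x :=
          mul_le_mul_of_nonneg_right h1 hex.le
    _ = μnorm x := by field_simp
end NormEquiv

/-! ### Induced matrix norm lemmas -/

section Nu
variable {n : ℕ} (μnorm : (Fin n → ℝ) → ℝ)
  (hμnonneg : ∀ x, 0 ≤ μnorm x)
  (hμzero : ∀ x, μnorm x = 0 ↔ x = 0)
  (K : ℝ) (hK : ∀ x, μnorm x ≤ K * euclNorm n x)
  (m : ℝ) (hm : 0 < m) (hml : ∀ x, m * euclNorm n x ≤ μnorm x)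
  (ν : Matrix (Fin n) (Fin n) ℝ → ℝ)
  (hν : ∀ N : Matrix (Fin n) (Fin n) ℝ,
      ν N = ⨆ x : {x : Fin n → ℝ // x ≠ 0},
        μnorm (N.mulVec (x : Fin n → ℝ)) / μnorm (x : Fin n → ℝ))

include hμnonneg hμzero hK hm hml hν in
lemma mu_mulVec_le_nu (N : Matrix (Fin n) (Fin n) ℝ) (x : Fin n → ℝ) :
    μnorm (N.mulVec x) ≤ ν N * μnorm x := by
  have hbdd : BddAbove (Set.range fun x : {x : Fin n → ℝ // x ≠ 0} =>
      μnorm (N.mulVec (x : Fin n → ℝ)) / μnorm (x : Fin n → ℝ)) := by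
    refine ⟨K * (∑ i, ∑ j, |N i j|) / m, ?_⟩
    rintro _ ⟨⟨y, hy⟩, rfl⟩
    simp only
    have hey : 0 < euclNorm n y :=
      lt_of_le_of_ne (euclNorm_nonneg n y) (fun hc => hy ((euclNorm_eq_zero_iff n y).mp hc.symm))
    have hμy : 0 < μnorm y := lt_of_lt_of_le (by positivity) (hml y)
    rw [div_le_div_iff₀ hμy hm]
    have hK0 : 0 ≤ K := by
      have := (hml y).trans (hK y)
      nlinarith [hey]
    calc μnorm (N.mulVec y) * m ≤ (K * euclNorm n (N.mulVec y)) * m :=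
          mul_le_mul_of_nonneg_right (hK _) hm.le
    _ ≤ (K * ((∑ i, ∑ j, |N i j|) * euclNorm n y)) * m := by
        exact mul_le_mul_of_nonneg_right
          (mul_le_mul_of_nonneg_left (euclNorm_mulVec_le n N y) hK0) hm.le
    _ = K * (∑ i, ∑ j, |N i j|) * (m * euclNorm n y) := by ring
    _ ≤ K * (∑ i, ∑ j, |N i j|) * μnorm y := by
        have hc0 : 0 ≤ K * (∑ i, ∑ j, |N i j|) := by
          have : (0:ℝ) ≤ ∑ i, ∑ j, |N i j| :=
            Finset.sum_nonneg fun i _ => Finset.sum_nonneg fun j _ => abs_nonneg _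
          positivity
        exact mul_le_mul_of_nonneg_left (hml y) hc0
  rcases eq_or_ne x 0 with rfl | hx
  · rw [Matrix.mulVec_zero, (hμzero 0).mpr rfl]; simp
  · have hμx : 0 < μnorm x :=
      lt_of_le_of_ne (hμnonneg x) (fun hc => hx ((hμzero x).mp hc.symm))
    have hle : μnorm (N.mulVec x) / μnorm x ≤ ν N := by
      rw [hν]
      exact le_ciSup hbdd ⟨x, hx⟩
    calc μnorm (N.mulVec x) = (μnorm (N.mulVec x) / μnorm x) * μnorm x := by field_simp
    _ ≤ ν N * μnorm x := mul_le_mul_of_nonneg_right hle hμx.le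

include hμnonneg hμzero hK hm hml hν in
lemma nu_pos_of_ne_zero (N : Matrix (Fin n) (Fin n) ℝ) (hN : N ≠ 0) : 0 < ν N := by
  have : ∃ i j, N i j ≠ 0 := by
    by_contra hc
    push_neg at hc
    exact hN (by ext i j; exact hc i j)
  obtain ⟨i, j, hij⟩ := this
  set ej : Fin n → ℝ := Pi.single j 1 with hej
  have hejne : ej ≠ 0 := by
    intro hc
    have : ej j = 0 := by rw [hc]; rfl
    rw [hej] at this; simp at this
  have hNej : N.mulVec ej i = N i j := by
    simp [hej, Matrix.mulVec, dotProduct, Pi.single_apply]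
  have hNejne : N.mulVec ej ≠ 0 := by
    intro hc
    rw [hc] at hNej
    exact hij (by simpa using hNej.symm)
  have hμej : 0 < μnorm ej :=
    lt_of_le_of_ne (hμnonneg ej) (fun hc => hejne ((hμzero ej).mp hc.symm))
  have hμNej : 0 < μnorm (N.mulVec ej) :=
    lt_of_le_of_ne (hμnonneg _) (fun hc => hNejne ((hμzero _).mp hc.symm))
  have := mu_mulVec_le_nu μnorm hμnonneg hμzero K hK m hm hml ν hν N ej
  nlinarith
end Nu

/-! ### Structural lemmas on `Gamma` -/

lemma Gamma_zero (M n : ℕ) (A : Fin M → Matrix (Fin n) (Fin n) ℝ) (q : Fin 0 → Fin M) :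
    Gamma M 0 n A q = 1 := by
  simp [Gamma]

lemma Gamma_succ (M k n : ℕ) (A : Fin M → Matrix (Fin n) (Fin n) ℝ) (q : Fin (k+1) → Fin M) :
    Gamma M (k+1) n A q = Gamma M k n A (fun j => q j.succ) * A (q 0) := by
  unfold Gamma
  rw [List.finRange_succ]
  rw [List.reverse_cons, List.map_append, List.prod_append]
  simp only [List.map_reverse, List.map_map]
  congr 1
  simp

/-! ### Summation and subsequence lemmas -/

lemma sum_range_mul_blocks {g : ℕ → ℝ} (h : ℕ) :
    ∀ k : ℕ, ∑ t ∈ Finset.range (k * h), g t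
      = ∑ i ∈ Finset.range k, ∑ j ∈ Finset.range h, g (i * h + j) := by
  intro k
  induction k with
  | zero => simp
  | succ k ih =>
    rw [Nat.succ_mul, Finset.sum_range_add, ih, Finset.sum_range_succ]

/-- liminf of the full sequence is at most the limit along a subsequence, etc. -/
lemma liminf_le_lim_subseq (a : ℕ → ℝ) (ha0 : ∀ m, 0 ≤ a m) (ha1 : ∀ m, a m ≤ 1)
    (φ : ℕ → ℕ) (hφ : Tendsto φ atTop atTop) (ℓ : ℝ)
    (hconv : Tendsto (fun k => a (φ k)) atTop (𝓝 ℓ)) :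
    liminf a atTop ≤ ℓ ∧ ℓ ≤ limsup a atTop := by
  have hbdd_le : IsBoundedUnder (· ≤ ·) atTop a := isBoundedUnder_of ⟨1, fun m => ha1 m⟩
  have hbdd_ge : IsBoundedUnder (· ≥ ·) atTop a := isBoundedUnder_of ⟨0, fun m => ha0 m⟩
  constructor
  · by_contra hc
    push_neg at hc
    set b := (ℓ + liminf a atTop) / 2 with hb
    have hb1 : ℓ < b := by rw [hb]; linarith
    have hb2 : b < liminf a atTop := by rw [hb]; linarith
    have hev : ∀ᶠ m in atTop, b < a m := eventually_lt_of_lt_liminf hb2 hbdd_ge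
    have hev2 : ∀ᶠ k in atTop, b < a (φ k) := hφ.eventually hev
    have : b ≤ ℓ := ge_of_tendsto hconv (hev2.mono fun k hk => hk.le)
    linarith
  · by_contra hc
    push_neg at hc
    set b := (limsup a atTop + ℓ) / 2 with hb
    have hb1 : limsup a atTop < b := by rw [hb]; linarith
    have hb2 : b < ℓ := by rw [hb]; linarith
    have hev : ∀ᶠ m in atTop, a m < b := eventually_lt_of_limsup_lt hb1 hbdd_le
    have hev2 : ∀ᶠ k in atTop, a (φ k) < b := hφ.eventually hev
    have : ℓ ≤ b := le_of_tendsto hconv (hev2.mono fun k hk => hk.le)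
    linarith

theorem stmt_1 {Ω : Type*} [MeasurableSpace Ω] (μ : Measure Ω) [IsProbabilityMeasure μ]
    (M h n : ℕ) (hM : 1 ≤ M) (hh : 1 ≤ h) (hn : 1 ≤ n)
    (A : Fin M → Matrix (Fin n) (Fin n) ℝ)
    (r : ℕ → Ω → Fin M) (hmeas : ∀ t, Measurable (r t))
    -- the solution process of the switched system `x(t+1) = A_{r(t)} x(t)`,
    -- as a function of the initial state
    (X : (Fin n → ℝ) → ℕ → Ω → (Fin n → ℝ))
    (hX0 : ∀ x₀ ω, X x₀ 0 ω = x₀)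
    (hXs : ∀ x₀ t ω, X x₀ (t + 1) ω = (A (r t ω)).mulVec (X x₀ t ω))
    -- (i): long-run activity bounds
    (ρlo ρhi : Fin M → ℝ)
    (hlo01 : ∀ s, ρlo s ∈ Set.Icc (0 : ℝ) 1) (hhi01 : ∀ s, ρhi s ∈ Set.Icc (0 : ℝ) 1)
    (hbounds : ∀ᵐ ω ∂μ, ∀ s : Fin M,
      ρlo s ≤ liminf (fun k : ℕ =>
        (1 / (k : ℝ)) * ∑ t ∈ Finset.range k, (if r t ω = s then (1 : ℝ) else 0)) atTop ∧
      limsup (fun k : ℕ =>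
        (1 / (k : ℝ)) * ∑ t ∈ Finset.range k, (if r t ω = s then (1 : ℝ) else 0)) atTop
        ≤ ρhi s)
    -- (ii): existence of the limits for the lifted process
    (hlim : ∀ q : Fin h → Fin M, ∃ L : Ω → ℝ, ∀ᵐ ω ∂μ,
      Tendsto (fun k : ℕ => (1 / (k : ℝ)) * ∑ i ∈ Finset.range k,
          (if (fun j : Fin h => r (i * h + (j : ℕ)) ω) = q then (1 : ℝ) else 0))
        atTop (𝓝 (L ω)))
    -- (iii): a vector norm, its induced matrix norm, and ε ∈ (0,1)
    (μnorm : (Fin n → ℝ) → ℝ)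
    (hμnonneg : ∀ x, 0 ≤ μnorm x)
    (hμzero : ∀ x, μnorm x = 0 ↔ x = 0)
    (hμsmul : ∀ (c : ℝ) x, μnorm (c • x) = |c| * μnorm x)
    (hμadd : ∀ x y, μnorm (x + y) ≤ μnorm x + μnorm y)
    (ν : Matrix (Fin n) (Fin n) ℝ → ℝ)
    (hν : ∀ N : Matrix (Fin n) (Fin n) ℝ,
      ν N = ⨆ x : {x : Fin n → ℝ // x ≠ 0},
        μnorm (N.mulVec (x : Fin n → ℝ)) / μnorm (x : Fin n → ℝ))
    (ε : ℝ) (hε : ε ∈ Set.Ioo (0 : ℝ) 1)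
    -- the LP stability condition: the objective is negative on the whole feasible set
    (hLP : ∀ ρ : (Fin h → Fin M) → ℝ,
      (∀ q, ρ q ∈ Set.Icc (0 : ℝ) 1) →
      (∑ q : Fin h → Fin M, ρ q = 1) →
      (∀ s : Fin M,
        ρlo s ≤ (∑ q : Fin h → Fin M, ((modeCount M h s q : ℝ) / (h : ℝ)) * ρ q) ∧
        (∑ q : Fin h → Fin M, ((modeCount M h s q : ℝ) / (h : ℝ)) * ρ q) ≤ ρhi s) →
      (∑ q : Fin h → Fin M,
        (if Gamma M h n A q = 0 then Real.log ε
          else Real.log (ν (Gamma M h n A q))) * ρ q) < 0) :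
    -- (a) almost sure stability
    (∀ ε' : ℝ, 0 < ε' → ∀ p : ℝ, 0 < p → ∃ δ : ℝ, 0 < δ ∧
      ∀ x₀ : Fin n → ℝ, euclNorm n x₀ < δ →
        μ {ω | ∃ t : ℕ, ε' < euclNorm n (X x₀ t ω)} < ENNReal.ofReal p) ∧
    -- (b) almost sure convergence to zero
    (∀ x₀ : Fin n → ℝ, ∀ᵐ ω ∂μ,
      Tendsto (fun t : ℕ => euclNorm n (X x₀ t ω)) atTop (𝓝 0)) := by
  -- set up norm-equivalence constants
  set K : ℝ := ∑ j, μnorm (Pi.single j 1) with hKdef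
  have hKle : ∀ x, μnorm x ≤ K * euclNorm n x := fun x =>
    mu_le_eucl μnorm hμnonneg hμsmul hμadd x
  obtain ⟨m, hm, hml⟩ := eucl_le_mu μnorm hμnonneg hμzero hμsmul hμadd hn
  -- β : the log-costs
  set β : (Fin h → Fin M) → ℝ := fun q =>
    if Gamma M h n A q = 0 then Real.log ε else Real.log (ν (Gamma M h n A q)) with hβdef
  -- key estimate : μnorm (Γ_q x) ≤ exp (β q) * μnorm x
  have hGam : ∀ (q : Fin h → Fin M) (x : Fin n → ℝ),
      μnorm ((Gamma M h n A q).mulVec x) ≤ Real.exp (β q) * μnorm x := by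
    intro q x
    by_cases hq : Gamma M h n A q = 0
    · rw [hq, Matrix.zero_mulVec, (hμzero 0).mpr rfl]
      exact mul_nonneg (Real.exp_pos _).le (hμnonneg x)
    · have hνpos : 0 < ν (Gamma M h n A q) :=
        nu_pos_of_ne_zero μnorm hμnonneg hμzero K hKle m hm hml ν hν _ hq
      have hβq : Real.exp (β q) = ν (Gamma M h n A q) := by
        rw [hβdef]; simp only [hq, if_false]
        exact Real.exp_log hνpos
      rw [hβq]
      exact mu_mulVec_le_nu μnorm hμnonneg hμzero K hKle m hm hml ν hν _ x
  -- the solution written via Gamma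
  have hdecomp : ∀ (x₀ : Fin n → ℝ) (ω : Ω) (kk mm : ℕ),
      X x₀ (mm + kk) ω = (Gamma M kk n A (fun j => r (mm + (j : ℕ)) ω)).mulVec (X x₀ mm ω) := by
    intro x₀ ω kk
    induction kk with
    | zero => intro mm; simp [Gamma_zero, Matrix.one_mulVec]
    | succ k ih =>
      intro mm
      have h1 : mm + (k + 1) = (mm + 1) + k := by omega
      rw [h1, ih (mm + 1), hXs, Matrix.mulVec_mulVec]
      rw [Gamma_succ]
      have e1 : (fun j : Fin k => r (mm + 1 + (j : ℕ)) ω)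
          = fun j : Fin k => r (mm + ((j.succ : Fin (k+1)) : ℕ)) ω := by
        funext j
        have : mm + 1 + (j : ℕ) = mm + ((j.succ : Fin (k+1)) : ℕ) := by
          simp only [Fin.val_succ]; omega
        rw [this]
      have e2 : r (mm + (((0 : Fin (k+1))) : ℕ)) ω = r mm ω := by norm_num
      rw [e1, e2]
  -- single step constant D
  obtain ⟨D, hD1, hD⟩ : ∃ D : ℝ, 1 ≤ D ∧ ∀ (s : Fin M) (v : Fin n → ℝ),
      μnorm ((A s).mulVec v) ≤ D * μnorm v := by
    have hK0 : 0 ≤ K := Finset.sum_nonneg fun j _ => hμnonneg _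
    refine ⟨1 + ∑ s : Fin M, K * (∑ i, ∑ j, |A s i j|) / m, ?_, ?_⟩
    · have : ∀ s : Fin M, 0 ≤ K * (∑ i, ∑ j, |A s i j|) / m := by
        intro s
        have : (0:ℝ) ≤ ∑ i, ∑ j, |A s i j| :=
          Finset.sum_nonneg fun i _ => Finset.sum_nonneg fun j _ => abs_nonneg _
        positivity
      have h0 : (0:ℝ) ≤ ∑ s : Fin M, K * (∑ i, ∑ j, |A s i j|) / m :=
        Finset.sum_nonneg fun s _ => this s
      linarith
    · intro s v
      have hEs0 : (0:ℝ) ≤ ∑ i, ∑ j, |A s i j| :=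
        Finset.sum_nonneg fun i _ => Finset.sum_nonneg fun j _ => abs_nonneg _
      have h2 : μnorm ((A s).mulVec v) ≤ K * ((∑ i, ∑ j, |A s i j|) * euclNorm n v) :=
        (hKle _).trans (mul_le_mul_of_nonneg_left (euclNorm_mulVec_le n (A s) v) hK0)
      have h3 : euclNorm n v ≤ μnorm v / m := by
        rw [le_div_iff₀ hm]; linarith [hml v]
      have h4 : μnorm ((A s).mulVec v) ≤ (K * (∑ i, ∑ j, |A s i j|) / m) * μnorm v := by
        calc μnorm ((A s).mulVec v) ≤ K * ((∑ i, ∑ j, |A s i j|) * euclNorm n v) := h2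
        _ ≤ K * ((∑ i, ∑ j, |A s i j|) * (μnorm v / m)) := by
            refine mul_le_mul_of_nonneg_left (mul_le_mul_of_nonneg_left h3 hEs0) hK0
        _ = (K * (∑ i, ∑ j, |A s i j|) / m) * μnorm v := by ring
      refine h4.trans (mul_le_mul_of_nonneg_right ?_ (hμnonneg v))
      have hterm : ∀ s' : Fin M, 0 ≤ K * (∑ i, ∑ j, |A s' i j|) / m := by
        intro s'
        have : (0:ℝ) ≤ ∑ i, ∑ j, |A s' i j| :=
          Finset.sum_nonneg fun i _ => Finset.sum_nonneg fun j _ => abs_nonneg _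
        positivity
      have := Finset.single_le_sum (fun s' _ => hterm s') (Finset.mem_univ s)
      linarith
  -- iterated step bound
  have hstep : ∀ (x₀ : Fin n → ℝ) (ω : Ω) (mm kk : ℕ),
      μnorm (X x₀ (mm + kk) ω) ≤ D ^ kk * μnorm (X x₀ mm ω) := by
    intro x₀ ω mm kk
    induction kk with
    | zero => simp
    | succ k ih =>
      rw [show mm + (k+1) = (mm + k) + 1 by omega, hXs]
      calc μnorm ((A (r (mm+k) ω)).mulVec (X x₀ (mm+k) ω)) ≤ D * μnorm (X x₀ (mm+k) ω) :=
            hD _ _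
      _ ≤ D * (D ^ k * μnorm (X x₀ mm ω)) := by
          refine mul_le_mul_of_nonneg_left ih (by linarith)
      _ = D ^ (k+1) * μnorm (X x₀ mm ω) := by ring
  -- block product bound
  have hprod : ∀ (x₀ : Fin n → ℝ) (ω : Ω) (k : ℕ),
      μnorm (X x₀ (k * h) ω) ≤ μnorm x₀ *
        Real.exp (∑ i ∈ Finset.range k, β (fun j : Fin h => r (i * h + (j : ℕ)) ω)) := by
    intro x₀ ω k
    induction k with
    | zero => simp [hX0]
    | succ k ih =>
      have hkh : (k + 1) * h = k * h + h := by ring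
      rw [hkh, hdecomp x₀ ω h (k * h)]
      calc μnorm ((Gamma M h n A (fun j : Fin h => r (k * h + (j:ℕ)) ω)).mulVec (X x₀ (k*h) ω))
          ≤ Real.exp (β (fun j : Fin h => r (k * h + (j:ℕ)) ω)) * μnorm (X x₀ (k*h) ω) :=
            hGam _ _
      _ ≤ Real.exp (β (fun j : Fin h => r (k * h + (j:ℕ)) ω)) *
            (μnorm x₀ * Real.exp (∑ i ∈ Finset.range k, β (fun j : Fin h => r (i*h+(j:ℕ)) ω))) :=
          mul_le_mul_of_nonneg_left ih (Real.exp_pos _).le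
      _ = μnorm x₀ *
            Real.exp (∑ i ∈ Finset.range (k+1), β (fun j : Fin h => r (i*h+(j:ℕ)) ω)) := by
          rw [Finset.sum_range_succ, Real.exp_add]; ring
  -- choose the limits L q
  set L : (Fin h → Fin M) → Ω → ℝ := fun q => Classical.choose (hlim q) with hLdef
  have hLae : ∀ q : Fin h → Fin M, ∀ᵐ ω ∂μ,
      Tendsto (fun k : ℕ => (1 / (k : ℝ)) * ∑ i ∈ Finset.range k,
          (if (fun j : Fin h => r (i * h + (j : ℕ)) ω) = q then (1 : ℝ) else 0))
        atTop (𝓝 (L q ω)) := fun q => Classical.choose_spec (hlim q)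
  -- part (b)
  have partb : ∀ x₀ : Fin n → ℝ, ∀ᵐ ω ∂μ,
      Tendsto (fun t : ℕ => euclNorm n (X x₀ t ω)) atTop (𝓝 0) := by
    intro x₀
    filter_upwards [hbounds, (ae_all_iff).2 hLae] with ω hb hq
    -- notation
    set v : ℕ → (Fin h → Fin M) := fun i => fun j : Fin h => r (i * h + (j : ℕ)) ω with hvdef
    set f : ℕ → (Fin h → Fin M) → ℝ := fun k q =>
      (1 / (k : ℝ)) * ∑ i ∈ Finset.range k, (if v i = q then (1 : ℝ) else 0) with hfdef
    have hfq : ∀ q, Tendsto (fun k => f k q) atTop (𝓝 (L q ω)) := fun q => hq q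
    -- the limit vector is LP-feasible
    have hf01 : ∀ (k : ℕ) (q), 1 ≤ k → f k q ∈ Set.Icc (0:ℝ) 1 := by
      intro k q hk
      constructor
      · apply mul_nonneg (by positivity)
        exact Finset.sum_nonneg fun i _ => by split <;> norm_num
      · rw [hfdef]
        simp only
        have hsle : (∑ i ∈ Finset.range k, (if v i = q then (1:ℝ) else 0)) ≤ k := by
          calc (∑ i ∈ Finset.range k, (if v i = q then (1:ℝ) else 0))
              ≤ ∑ i ∈ Finset.range k, 1 := by
                refine Finset.sum_le_sum fun i _ => by split <;> norm_num
          _ = k := by simp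
        have hkpos : (0:ℝ) < k := by exact_mod_cast hk
        rw [one_div, inv_mul_le_iff₀ hkpos, mul_one]
        exact hsle
    have hL01 : ∀ q, L q ω ∈ Set.Icc (0:ℝ) 1 := by
      intro q
      constructor
      · exact ge_of_tendsto (hfq q)
          (eventually_atTop.2 ⟨1, fun k hk => (hf01 k q hk).1⟩)
      · exact le_of_tendsto (hfq q)
          (eventually_atTop.2 ⟨1, fun k hk => (hf01 k q hk).2⟩)
    have hLsum : (∑ q : Fin h → Fin M, L q ω) = 1 := by
      have h1 : Tendsto (fun k => ∑ q : Fin h → Fin M, f k q) atTop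
          (𝓝 (∑ q : Fin h → Fin M, L q ω)) :=
        tendsto_finset_sum _ fun q _ => hfq q
      have h2 : ∀ᶠ k in atTop, (∑ q : Fin h → Fin M, f k q) = 1 := by
        refine eventually_atTop.2 ⟨1, fun k hk => ?_⟩
        rw [hfdef]
        simp only
        rw [← Finset.mul_sum, Finset.sum_comm]
        have : ∀ i ∈ Finset.range k,
            (∑ q : Fin h → Fin M, if v i = q then (1:ℝ) else 0) = 1 := by
          intro i _
          rw [Finset.sum_ite_eq]
          simp
        rw [Finset.sum_congr rfl this]
        have hkpos : (0:ℝ) < k := by exact_mod_cast hk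
        rw [Finset.sum_const, Finset.card_range, nsmul_eq_mul, mul_one]
        field_simp
      have h3 : Tendsto (fun _ : ℕ => (1:ℝ)) atTop (𝓝 1) := tendsto_const_nhds
      exact (tendsto_nhds_unique (Filter.Tendsto.congr' h2 h1) h3)
    have hLmode : ∀ s : Fin M,
        ρlo s ≤ (∑ q : Fin h → Fin M, ((modeCount M h s q : ℝ) / (h : ℝ)) * L q ω) ∧
        (∑ q : Fin h → Fin M, ((modeCount M h s q : ℝ) / (h : ℝ)) * L q ω) ≤ ρhi s := by
      intro s
      set a : ℕ → ℝ := fun mm =>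
        (1 / (mm : ℝ)) * ∑ t ∈ Finset.range mm, (if r t ω = s then (1 : ℝ) else 0) with hadef
      have ha0 : ∀ mm, 0 ≤ a mm := by
        intro mm
        apply mul_nonneg (by positivity)
        exact Finset.sum_nonneg fun i _ => by split <;> norm_num
      have ha1 : ∀ mm, a mm ≤ 1 := by
        intro mm
        rcases Nat.eq_zero_or_pos mm with rfl | hmm
        · simp [hadef]
        · rw [hadef]
          simp only
          have hsle : (∑ t ∈ Finset.range mm, (if r t ω = s then (1:ℝ) else 0)) ≤ mm := by
            calc (∑ t ∈ Finset.range mm, (if r t ω = s then (1:ℝ) else 0))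
                ≤ ∑ t ∈ Finset.range mm, 1 := by
                  refine Finset.sum_le_sum fun i _ => by split <;> norm_num
            _ = mm := by simp
          have hmpos : (0:ℝ) < mm := by exact_mod_cast hmm
          rw [one_div, inv_mul_le_iff₀ hmpos, mul_one]
          exact hsle
      -- key identity : a (k*h) = Σ_q (c_s q / h) f k q   (for k ≥ 1)
      have hident : ∀ k : ℕ, 1 ≤ k →
          a (k * h) = ∑ q : Fin h → Fin M, ((modeCount M h s q : ℝ) / (h : ℝ)) * f k q := by
        intro k hk
        have hkpos : (0:ℝ) < k := by exact_mod_cast hk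
        have hhpos : (0:ℝ) < h := by exact_mod_cast hh
        -- Σ_q c_s(q) * ite (v i = q) = c_s (v i)
        have hcnt : ∀ i : ℕ, (∑ q : Fin h → Fin M,
            (modeCount M h s q : ℝ) * (if v i = q then (1:ℝ) else 0))
            = ∑ j ∈ Finset.range h, (if r (i * h + j) ω = s then (1:ℝ) else 0) := by
          intro i
          have h1 : (∑ q : Fin h → Fin M,
              (modeCount M h s q : ℝ) * (if v i = q then (1:ℝ) else 0))
              = (modeCount M h s (v i) : ℝ) := by
            have hterm : ∀ q : Fin h → Fin M,
                (modeCount M h s q : ℝ) * (if v i = q then (1:ℝ) else 0)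
                = if v i = q then (modeCount M h s q : ℝ) else 0 := by
              intro q; split <;> simp
            simp only [hterm]
            rw [Finset.sum_ite_eq]
            simp
          rw [h1]
          have h2 : (modeCount M h s (v i) : ℝ)
              = ∑ j : Fin h, (if v i j = s then (1:ℝ) else 0) := by
            unfold modeCount
            rw [Finset.card_filter]
            push_cast
            exact Finset.sum_congr rfl fun j _ => by split <;> norm_num
          rw [h2, hvdef]
          simp only
          exact Fin.sum_univ_eq_sum_range (fun j => if r (i * h + j) ω = s then (1:ℝ) else 0) h
        calc a (k * h)
            = (1 / ((k : ℝ) * h)) * ∑ t ∈ Finset.range (k * h),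
                (if r t ω = s then (1:ℝ) else 0) := by
              rw [hadef]; push_cast; ring_nf
        _ = (1 / ((k : ℝ) * h)) * ∑ i ∈ Finset.range k, ∑ j ∈ Finset.range h,
                (if r (i * h + j) ω = s then (1:ℝ) else 0) := by
              rw [sum_range_mul_blocks]
        _ = (1 / ((k : ℝ) * h)) * ∑ i ∈ Finset.range k, ∑ q : Fin h → Fin M,
                (modeCount M h s q : ℝ) * (if v i = q then (1:ℝ) else 0) := by
              congr 1
              exact Finset.sum_congr rfl fun i _ => (hcnt i).symm
        _ = (1 / ((k : ℝ) * h)) * ∑ q : Fin h → Fin M,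
                (modeCount M h s q : ℝ) * ∑ i ∈ Finset.range k,
                  (if v i = q then (1:ℝ) else 0) := by
              rw [Finset.sum_comm]
              congr 1
              exact Finset.sum_congr rfl fun q _ => (Finset.mul_sum _ _ _).symm
        _ = ∑ q : Fin h → Fin M, ((1 / ((k : ℝ) * h)) *
                ((modeCount M h s q : ℝ) * ∑ i ∈ Finset.range k,
                  (if v i = q then (1:ℝ) else 0))) := Finset.mul_sum _ _ _
        _ = ∑ q : Fin h → Fin M, ((modeCount M h s q : ℝ) / (h : ℝ)) * f k q := by
              refine Finset.sum_congr rfl fun q _ => ?_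
              rw [hfdef]
              simp only
              field_simp
              try exact Or.inl trivial
      set ℓs : ℝ := ∑ q : Fin h → Fin M, ((modeCount M h s q : ℝ) / (h : ℝ)) * L q ω with hℓs
      have hconv : Tendsto (fun k => a (k * h)) atTop (𝓝 ℓs) := by
        have h1 : Tendsto (fun k => ∑ q : Fin h → Fin M,
            ((modeCount M h s q : ℝ) / (h : ℝ)) * f k q) atTop (𝓝 ℓs) := by
          rw [hℓs]
          exact tendsto_finset_sum _ fun q _ => (hfq q).const_mul _
        refine h1.congr' ?_
        exact (eventually_atTop.2 ⟨1, fun k hk => (hident k hk).symm⟩)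
      have hφ : Tendsto (fun k : ℕ => k * h) atTop atTop := by
        refine tendsto_atTop_atTop.2 fun b => ⟨b, fun t ht => ?_⟩
        calc b ≤ t := ht
        _ ≤ t * h := Nat.le_mul_of_pos_right t hh
      have := liminf_le_lim_subseq a ha0 ha1 _ hφ ℓs hconv
      exact ⟨le_trans (hb s).1 this.1, le_trans this.2 (hb s).2⟩
    -- apply the LP condition
    have hσneg : (∑ q : Fin h → Fin M, β q * L q ω) < 0 := by
      have := hLP (fun q => L q ω) hL01 hLsum hLmode
      rw [hβdef]
      exact this
    set σ : ℝ := ∑ q : Fin h → Fin M, β q * L q ω with hσdef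
    -- convergence of block log-averages
    have hσconv : Tendsto (fun k => ∑ q : Fin h → Fin M, β q * f k q) atTop (𝓝 σ) := by
      rw [hσdef]
      exact tendsto_finset_sum _ fun q _ => (hfq q).const_mul _
    -- Σ_{i<k} β (v i) = k * Σ_q β q f k q  (for k ≥ 1)
    have hsum_eq : ∀ k : ℕ, 1 ≤ k →
        (∑ i ∈ Finset.range k, β (v i)) = k * ∑ q : Fin h → Fin M, β q * f k q := by
      intro k hk
      have hkne : ((k:ℝ)) ≠ 0 := Nat.cast_ne_zero.mpr (by omega)
      have h1 : ∀ i : ℕ, β (v i) = ∑ q : Fin h → Fin M,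
          β q * (if v i = q then (1:ℝ) else 0) := by
        intro i
        have hterm : ∀ q : Fin h → Fin M,
            β q * (if v i = q then (1:ℝ) else 0) = if v i = q then β q else 0 := by
          intro q; split <;> simp
        simp only [hterm]
        rw [Finset.sum_ite_eq]
        simp
      calc (∑ i ∈ Finset.range k, β (v i))
          = ∑ i ∈ Finset.range k, ∑ q : Fin h → Fin M,
              β q * (if v i = q then (1:ℝ) else 0) :=
            Finset.sum_congr rfl fun i _ => h1 i
      _ = ∑ q : Fin h → Fin M, β q * ∑ i ∈ Finset.range k,
              (if v i = q then (1:ℝ) else 0) := by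
            rw [Finset.sum_comm]
            exact Finset.sum_congr rfl fun q _ => (Finset.mul_sum _ _ _).symm
      _ = ∑ q : Fin h → Fin M, (k:ℝ) * (β q * f k q) := by
            refine Finset.sum_congr rfl fun q _ => ?_
            rw [hfdef]
            simp only
            field_simp
      _ = (k:ℝ) * ∑ q : Fin h → Fin M, β q * f k q := (Finset.mul_sum _ _ _).symm
    -- the block values tend to 0
    have hu0 : Tendsto (fun k => μnorm (X x₀ (k * h) ω)) atTop (𝓝 0) := by
      have hev : ∀ᶠ k in atTop, μnorm (X x₀ (k * h) ω)
          ≤ μnorm x₀ * Real.exp ((k:ℝ) * ∑ q : Fin h → Fin M, β q * f k q) := by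
        refine eventually_atTop.2 ⟨1, fun k hk => ?_⟩
        have := hprod x₀ ω k
        rw [show (∑ i ∈ Finset.range k, β (fun j : Fin h => r (i * h + (j:ℕ)) ω))
            = ∑ i ∈ Finset.range k, β (v i) from rfl, hsum_eq k hk] at this
        exact_mod_cast this
      have hbot : Tendsto (fun k : ℕ => (k:ℝ) * ∑ q : Fin h → Fin M, β q * f k q)
          atTop atBot := by
        have hhalf : σ / 2 < 0 := by linarith
        have hev2 : ∀ᶠ k : ℕ in atTop,
            (k:ℝ) * ∑ q : Fin h → Fin M, β q * f k q ≤ (k:ℝ) * (σ / 2) := by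
          have : ∀ᶠ k : ℕ in atTop, (∑ q : Fin h → Fin M, β q * f k q) ≤ σ / 2 :=
            hσconv.eventually_le_const (by linarith)
          filter_upwards [this] with k hk2
          exact mul_le_mul_of_nonneg_left hk2 (Nat.cast_nonneg k)
        have hbot2 : Tendsto (fun k : ℕ => (k:ℝ) * (σ / 2)) atTop atBot :=
          tendsto_natCast_atTop_atTop.atTop_mul_const_of_neg hhalf
        exact tendsto_atBot_mono' _ hev2 hbot2
      have hexp : Tendsto (fun k : ℕ => μnorm x₀ *
          Real.exp ((k:ℝ) * ∑ q : Fin h → Fin M, β q * f k q)) atTop (𝓝 0) := by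
        have := (Real.tendsto_exp_atBot.comp hbot).const_mul (μnorm x₀)
        simpa using this
      exact squeeze_zero' (Eventually.of_forall fun k => hμnonneg _) hev hexp
    -- full sequence tends to 0 in μnorm
    have hfull : Tendsto (fun t : ℕ => μnorm (X x₀ t ω)) atTop (𝓝 0) := by
      have hboundt : ∀ t : ℕ, μnorm (X x₀ t ω) ≤ D ^ h * μnorm (X x₀ ((t / h) * h) ω) := by
        intro t
        have hdm : (t / h) * h + t % h = t := by
          rw [mul_comm]; exact Nat.div_add_mod t h
        calc μnorm (X x₀ t ω) = μnorm (X x₀ ((t / h) * h + t % h) ω) := by rw [hdm]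
        _ ≤ D ^ (t % h) * μnorm (X x₀ ((t / h) * h) ω) := hstep x₀ ω _ _
        _ ≤ D ^ h * μnorm (X x₀ ((t / h) * h) ω) := by
            refine mul_le_mul_of_nonneg_right ?_ (hμnonneg _)
            exact pow_le_pow_right₀ hD1 (le_of_lt (Nat.mod_lt t hh))
      have hdiv : Tendsto (fun t : ℕ => t / h) atTop atTop := by
        refine tendsto_atTop_atTop.2 fun b => ⟨b * h, fun t ht => ?_⟩
        exact (Nat.le_div_iff_mul_le hh).2 ht
      have hcomp : Tendsto (fun t : ℕ => D ^ h * μnorm (X x₀ ((t / h) * h) ω)) atTop (𝓝 0) := by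
        have := (hu0.comp hdiv).const_mul (D ^ h)
        simpa using this
      exact squeeze_zero (fun t => hμnonneg _) hboundt hcomp
    -- convert to euclNorm
    have hboundr : ∀ t : ℕ, euclNorm n (X x₀ t ω) ≤ μnorm (X x₀ t ω) * m⁻¹ := by
      intro t
      have hml' := hml (X x₀ t ω)
      calc euclNorm n (X x₀ t ω) = (m * euclNorm n (X x₀ t ω)) * m⁻¹ := by field_simp
      _ ≤ μnorm (X x₀ t ω) * m⁻¹ :=
          mul_le_mul_of_nonneg_right hml' (inv_nonneg.mpr hm.le)
    have hconv2 : Tendsto (fun t : ℕ => μnorm (X x₀ t ω) * m⁻¹) atTop (𝓝 0) := by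
      have := hfull.mul_const m⁻¹
      simpa using this
    exact squeeze_zero (fun t => euclNorm_nonneg _ _) hboundr hconv2
  refine ⟨?_, partb⟩
  -- part (a)
  intro ε' hε' p hp
  -- linearity of X in the initial condition
  have hlin : ∀ (x₀ : Fin n → ℝ) (t : ℕ) (ω : Ω),
      X x₀ t ω = ∑ j, (x₀ j) • X (Pi.single j 1) t ω := by
    intro x₀ t
    induction t with
    | zero =>
      intro ω
      rw [hX0]
      funext i
      simp [hX0, Pi.single_apply, Finset.sum_apply, mul_comm]
    | succ t ih =>
      intro ω
      have hmv : (A (r t ω)).mulVec (∑ j, (x₀ j) • X (Pi.single j 1) t ω)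
          = ∑ j, (x₀ j) • (A (r t ω)).mulVec (X (Pi.single j 1) t ω) := by
        simp only [← Matrix.mulVecLin_apply, _root_.map_sum, _root_.map_smul]
      rw [hXs, ih ω, hmv]
      exact Finset.sum_congr rfl fun j _ => by rw [hXs]
  -- the random operator magnitude
  set E : ℕ → Ω → ℝ := fun t ω => ∑ j, euclNorm n (X (Pi.single j 1) t ω) with hEdef
  have hE : ∀ (x₀ : Fin n → ℝ) (t : ℕ) (ω : Ω),
      euclNorm n (X x₀ t ω) ≤ euclNorm n x₀ * ((n:ℝ) * E t ω) := by
    intro x₀ t ω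
    set w : Fin n → (Fin n → ℝ) := fun j => X (Pi.single j 1) t ω with hwdef
    have hz : X x₀ t ω = ∑ j, (x₀ j) • w j := hlin x₀ t ω
    calc euclNorm n (X x₀ t ω) ≤ ∑ i, |X x₀ t ω i| := euclNorm_le_sum_abs n _
    _ ≤ ∑ i, ∑ j, |x₀ j| * |w j i| := by
        refine Finset.sum_le_sum fun i _ => ?_
        rw [hz]
        calc |(∑ j, (x₀ j) • w j) i| = |∑ j, (x₀ j) * w j i| := by
              rw [Finset.sum_apply]; simp
        _ ≤ ∑ j, |(x₀ j) * w j i| := Finset.abs_sum_le_sum_abs _ _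
        _ = ∑ j, |x₀ j| * |w j i| := by
            exact Finset.sum_congr rfl fun j _ => abs_mul _ _
    _ ≤ ∑ i, ∑ j, euclNorm n x₀ * euclNorm n (w j) := by
        refine Finset.sum_le_sum fun i _ => Finset.sum_le_sum fun j _ => ?_
        exact mul_le_mul (abs_le_euclNorm n x₀ j) (abs_le_euclNorm n (w j) i)
          (abs_nonneg _) (euclNorm_nonneg _ _)
    _ = (n:ℝ) * (euclNorm n x₀ * ∑ j, euclNorm n (w j)) := by
        rw [Finset.sum_const, Finset.card_univ, Fintype.card_fin, nsmul_eq_mul,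
          ← Finset.mul_sum]
    _ = euclNorm n x₀ * ((n:ℝ) * E t ω) := by
        have hEw : E t ω = ∑ j, euclNorm n (w j) := rfl
        rw [hEw]; ring
  -- measurability of E t
  have hXmeas : ∀ (x₀ : Fin n → ℝ) (t : ℕ) (i : Fin n),
      Measurable (fun ω => X x₀ t ω i) := by
    intro x₀ t
    induction t with
    | zero =>
      intro i
      have : (fun ω => X x₀ 0 ω i) = fun _ => x₀ i := by
        funext ω; rw [hX0]
      rw [this]; exact measurable_const
    | succ t ih =>
      intro i
      have : (fun ω => X x₀ (t+1) ω i) = fun ω => ∑ j, A (r t ω) i j * X x₀ t ω j := by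
        funext ω
        rw [hXs]
        simp [Matrix.mulVec, dotProduct]
      rw [this]
      refine Finset.measurable_sum _ fun j _ => ?_
      exact ((measurable_from_top (f := fun s : Fin M => A s i j)).comp (hmeas t)).mul (ih j)
  have hEmeas : ∀ t, Measurable (E t) := by
    intro t
    refine Finset.measurable_sum _ fun j _ => ?_
    unfold euclNorm
    exact (Finset.measurable_sum _ fun i _ => ((hXmeas _ t i).pow_const 2)).sqrt
  -- the decreasing events
  set B : ℕ → Set Ω := fun C => {ω | ∃ t : ℕ, (C : ℝ) < E t ω} with hBdef
  have hBmeas : ∀ C, MeasurableSet (B C) := by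
    intro C
    have : B C = ⋃ t : ℕ, {ω | (C:ℝ) < E t ω} := by
      ext ω; simp [hBdef]
    rw [this]
    exact MeasurableSet.iUnion fun t => measurableSet_lt measurable_const (hEmeas t)
  have hBanti : Antitone B := by
    intro C C' hCC' ω hω
    obtain ⟨t, ht⟩ := hω
    exact ⟨t, lt_of_le_of_lt (by exact_mod_cast hCC') ht⟩
  have hBnull : μ (⋂ C, B C) = 0 := by
    have hae : ∀ᵐ ω ∂μ, ∃ C : ℕ, ∀ t, E t ω ≤ C := by
      have hall : ∀ᵐ ω ∂μ, ∀ j : Fin n,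
          Tendsto (fun t : ℕ => euclNorm n (X (Pi.single j 1) t ω)) atTop (𝓝 0) :=
        (ae_all_iff).2 fun j => partb (Pi.single j 1)
      filter_upwards [hall] with ω hω
      have hEt : Tendsto (fun t => E t ω) atTop (𝓝 0) := by
        have := tendsto_finset_sum (Finset.univ : Finset (Fin n)) fun j _ => hω j
        simpa [hEdef] using this
      obtain ⟨bo, hbo⟩ := hEt.bddAbove_range
      refine ⟨⌈bo⌉₊, fun t => ?_⟩
      have h1 : E t ω ≤ bo := hbo ⟨t, rfl⟩
      exact h1.trans (Nat.le_ceil bo)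
    refine measure_mono_null (fun ω hω => ?_) (ae_iff.mp hae)
    simp only [Set.mem_iInter, hBdef, Set.mem_setOf_eq] at hω
    show ω ∈ {a | ¬ ∃ C : ℕ, ∀ t, E t a ≤ (C:ℝ)}
    simp only [Set.mem_setOf_eq]
    rintro ⟨C, hC⟩
    obtain ⟨t, ht⟩ := hω C
    exact absurd (hC t) (not_le.mpr ht)
  -- continuity from above
  have htend : Tendsto (fun C : ℕ => μ (B C)) atTop (𝓝 0) := by
    have := tendsto_measure_iInter_atTop (μ := μ)
      (fun C => (hBmeas C).nullMeasurableSet) hBanti ⟨0, measure_ne_top μ _⟩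
    rw [hBnull] at this
    exact this
  obtain ⟨C, hC⟩ := (htend.eventually_lt_const (ENNReal.ofReal_pos.2 hp)).exists
  refine ⟨ε' / ((n+1) * (C+1)), by positivity, fun x₀ hx₀ => ?_⟩
  refine lt_of_le_of_lt (measure_mono ?_) hC
  intro ω hω
  simp only [Set.mem_setOf_eq] at hω
  obtain ⟨t, ht⟩ := hω
  rw [hBdef]
  simp only [Set.mem_setOf_eq]
  by_contra hcon
  push_neg at hcon
  have hE0 : (0:ℝ) ≤ E t ω := by
    have hEw : E t ω = ∑ j, euclNorm n (X (Pi.single j 1) t ω) := rfl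
    rw [hEw]
    exact Finset.sum_nonneg fun j _ => euclNorm_nonneg _ _
  have h1 := hE x₀ t ω
  have hδ : euclNorm n x₀ ≤ ε' / ((n+1) * (C+1)) := hx₀.le
  have hEC : (n:ℝ) * E t ω ≤ (n:ℝ) * C :=
    mul_le_mul_of_nonneg_left (hcon t) (Nat.cast_nonneg n)
  have hfin : euclNorm n (X x₀ t ω) ≤ (ε' / ((n+1) * (C+1))) * ((n:ℝ) * C) := by
    refine h1.trans (mul_le_mul hδ hEC (mul_nonneg (Nat.cast_nonneg n) hE0) (by positivity))
  have hlast : (ε' / ((n+1) * (C+1))) * ((n:ℝ) * C) < ε' := by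
    rw [div_mul_eq_mul_div, div_lt_iff₀ (by positivity)]
    have hnn : (0:ℝ) ≤ (n:ℝ) := Nat.cast_nonneg n
    have hcc : (0:ℝ) ≤ (C:ℝ) := Nat.cast_nonneg C
    nlinarith
  linarith [hfin.trans_lt hlast]
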